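/- Let H be an n × n real matrix with n ≥ 1. Then the operator norm of H (with respect to the Euclidean norm on ℝⁿ) is given by ‖H‖ = lim_{k→∞} ( trace( (H·Hᵀ)^k ) )^{1/(2k)}, where Hᵀ is the transpose of H; in particular the limit on the right-hand side exists. -/

import Mathlib

open Filter

/-- The operator norm of a square real matrix, induced by the Euclidean (ℓ²) norm on `ℝⁿ`,
realised through the action of the matrix on `EuclideanSpace ℝ (Fin n)`. -/
noncomputable def euclideanOpNorm (n : ℕ) (H : Matrix (Fin n) (Fin n) ℝ) : ℝ :=
  ‖Matrix.toEuclideanCLM (𝕜 := ℝ) (n := Fin n) H‖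

open scoped Matrix.Norms.L2Operator

namespace OpNormAux

open Matrix

variable {n : ℕ}

lemma conj_pow (V D : Matrix (Fin n) (Fin n) ℝ) (hV : star V * V = 1) (hV' : V * star V = 1)
    (k : ℕ) : (V * D * star V) ^ k = V * D ^ k * star V := by
  induction k with
  | zero => simpa using hV'.symm
  | succ k ih =>
      rw [pow_succ, ih, pow_succ]
      have h1 : V * D ^ k * star V * (V * D * star V)
          = V * D ^ k * (star V * V * (D * star V)) := by simp only [mul_assoc]
      rw [h1, hV, one_mul]
      simp only [mul_assoc]

lemma trace_pow (A : Matrix (Fin n) (Fin n) ℝ) (hA : A.IsHermitian) (k : ℕ) :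
    (A ^ k).trace = ∑ i, hA.eigenvalues i ^ k := by
  have h := hA.spectral_theorem
  have hd : (RCLike.ofReal ∘ hA.eigenvalues : Fin n → ℝ) = hA.eigenvalues := by
    funext i; simp
  rw [hd, Unitary.conjStarAlgAut_apply] at h
  conv_lhs => rw [h]
  rw [conj_pow _ _ (Unitary.coe_star_mul_self _) (Unitary.coe_mul_star_self _),
    Matrix.trace_mul_cycle, Unitary.coe_star_mul_self, one_mul,
    Matrix.diagonal_pow, Matrix.trace_diagonal]
  simp

lemma norm_diagonal_le (d : Fin n → ℝ) (C : ℝ) (hC : 0 ≤ C) (h : ∀ i, |d i| ≤ C) :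
    ‖Matrix.diagonal d‖ ≤ C := by
  rw [Matrix.cstar_norm_def]
  refine ContinuousLinearMap.opNorm_le_bound _ hC fun x => ?_
  have hx : ∀ i, (Matrix.toEuclideanCLM (𝕜 := ℝ) (n := Fin n) (Matrix.diagonal d)) x i
      = d i * x i := by
    intro i
    have h0 := Matrix.ofLp_toEuclideanCLM (𝕜 := ℝ) (n := Fin n) (Matrix.diagonal d) x
    have := congrFun h0 i
    simpa [Matrix.toLin'_apply, Matrix.mulVec_diagonal] using this
  rw [EuclideanSpace.norm_eq, EuclideanSpace.norm_eq]
  have hle : ∑ i, ‖(Matrix.toEuclideanCLM (𝕜 := ℝ) (n := Fin n) (Matrix.diagonal d)) x i‖ ^ 2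
      ≤ ∑ i, C ^ 2 * ‖x i‖ ^ 2 := by
    refine Finset.sum_le_sum fun i _ => ?_
    rw [hx i]
    rw [Real.norm_eq_abs, Real.norm_eq_abs, abs_mul, mul_pow]
    exact mul_le_mul_of_nonneg_right (by
      have := h i
      nlinarith [abs_nonneg (d i), abs_nonneg (x i)]) (by positivity)
  calc √(∑ i, ‖(Matrix.toEuclideanCLM (𝕜 := ℝ) (n := Fin n) (Matrix.diagonal d)) x i‖ ^ 2)
      ≤ √(∑ i, C ^ 2 * ‖x i‖ ^ 2) := Real.sqrt_le_sqrt hle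
    _ = C * √(∑ i, ‖x i‖ ^ 2) := by
        rw [← Finset.mul_sum, Real.sqrt_mul (by positivity), Real.sqrt_sq hC]

lemma abs_eigenvalue_le (A : Matrix (Fin n) (Fin n) ℝ) (hA : A.IsHermitian) (i : Fin n) :
    |hA.eigenvalues i| ≤ ‖A‖ := by
  set v : EuclideanSpace ℝ (Fin n) := hA.eigenvectorBasis i with hv
  have hv1 : ‖v‖ = 1 := hA.eigenvectorBasis.orthonormal.1 i
  have key : ‖hA.eigenvalues i • v‖ ≤ ‖A‖ * ‖v‖ := by
    have h6 := Matrix.l2_opNorm_mulVec A (x := hA.eigenvectorBasis i)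
    have h5 : (EuclideanSpace.equiv (Fin n) ℝ).symm (A *ᵥ ⇑(hA.eigenvectorBasis i))
        = hA.eigenvalues i • v := by
      rw [hA.mulVec_eigenvectorBasis i]; rfl
    calc ‖hA.eigenvalues i • v‖
        = ‖(EuclideanSpace.equiv (Fin n) ℝ).symm (A *ᵥ ⇑(hA.eigenvectorBasis i))‖ := by rw [h5]
      _ ≤ ‖A‖ * ‖v‖ := h6
  rw [norm_smul, hv1, mul_one, Real.norm_eq_abs] at key
  simpa using key

lemma norm_unitary (hn : 1 ≤ n) (V : Matrix.unitaryGroup (Fin n) ℝ) :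
    ‖(V : Matrix (Fin n) (Fin n) ℝ)‖ = 1 := by
  haveI : NeZero n := ⟨by omega⟩
  have h1 : ‖(1 : Matrix (Fin n) (Fin n) ℝ)‖ = 1 := by
    rw [Matrix.cstar_norm_def, _root_.map_one]
    exact ContinuousLinearMap.norm_id
  have h2 := Matrix.l2_opNorm_conjTranspose_mul_self (V : Matrix (Fin n) (Fin n) ℝ)
  rw [← Matrix.star_eq_conjTranspose, Unitary.coe_star_mul_self, h1] at h2
  rcases mul_self_eq_one_iff.mp h2.symm with h | h
  · exact h
  · exfalso; have := norm_nonneg (V : Matrix (Fin n) (Fin n) ℝ); linarith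

end OpNormAux

/-- For an `n × n` real matrix `H` (`n ≥ 1`), the Euclidean operator norm is recovered as
`‖H‖ = lim_{k→∞} (trace((H·Hᵀ)^k))^{1/(2k)}`; in particular the limit exists.  The real
exponent `1/(2k)` is interpreted via `Real.rpow`. -/
theorem opNorm_eq_lim_trace_pow (n : ℕ) (hn : 1 ≤ n) (H : Matrix (Fin n) (Fin n) ℝ) :
    Tendsto (fun k : ℕ => Matrix.trace ((H * H.transpose) ^ k) ^ (1 / (2 * (k : ℝ))))
      atTop (nhds (euclideanOpNorm n H)) := by
  haveI : NeZero n := ⟨by omega⟩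
  set A := H * H.transpose with hAdef
  have hHt : H.transpose = H.conjTranspose := (H.conjTranspose_eq_transpose_of_trivial).symm
  have hP : A.PosSemidef := by
    rw [hAdef, hHt]; exact Matrix.posSemidef_self_mul_conjTranspose H
  have hA : A.IsHermitian := hP.1
  set lam := hA.eigenvalues with hlam
  have hl0 : ∀ i, 0 ≤ lam i := fun i => hP.eigenvalues_nonneg i
  have hne : (Finset.univ : Finset (Fin n)).Nonempty := Finset.univ_nonempty
  set M := Finset.univ.sup' hne lam with hMdef
  have hlM : ∀ i, lam i ≤ M := fun i => Finset.le_sup' lam (Finset.mem_univ i)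
  have hM0 : 0 ≤ M := le_trans (hl0 (Classical.arbitrary _)) (hlM _)
  -- the operator norm of `A` equals the largest eigenvalue
  have hnormA : ‖A‖ = M := by
    apply le_antisymm
    · conv_lhs => rw [hA.spectral_theorem]
      have hd : (RCLike.ofReal ∘ hA.eigenvalues : Fin n → ℝ) = lam := by
        funext i; simp [hlam]
      rw [hd, Unitary.conjStarAlgAut_apply]
      set V : Matrix (Fin n) (Fin n) ℝ := (hA.eigenvectorUnitary : Matrix (Fin n) (Fin n) ℝ) with hV
      have hVn : ‖V‖ = 1 := OpNormAux.norm_unitary hn _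
      have hVsn : ‖star V‖ = 1 := by
        rw [Matrix.star_eq_conjTranspose, Matrix.l2_opNorm_conjTranspose]; exact hVn
      have hDn : ‖Matrix.diagonal lam‖ ≤ M :=
        OpNormAux.norm_diagonal_le lam M hM0 fun i => by
          rw [abs_of_nonneg (hl0 i)]; exact hlM i
      calc ‖V * Matrix.diagonal lam * star V‖
          ≤ ‖V * Matrix.diagonal lam‖ * ‖star V‖ := Matrix.l2_opNorm_mul _ _
        _ ≤ ‖V‖ * ‖Matrix.diagonal lam‖ * ‖star V‖ :=
            mul_le_mul_of_nonneg_right (Matrix.l2_opNorm_mul _ _) (norm_nonneg _)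
        _ ≤ 1 * M * 1 := by
            rw [hVn, hVsn]
            exact mul_le_mul_of_nonneg_right
              (mul_le_mul_of_nonneg_left hDn (by norm_num)) (by norm_num)
        _ = M := by ring
    · exact Finset.sup'_le _ _ fun i _ =>
        (le_abs_self _).trans (OpNormAux.abs_eigenvalue_le A hA i)
  have hHA : ‖H‖ * ‖H‖ = M := by
    rw [← hnormA, hAdef, hHt]
    have h := Matrix.l2_opNorm_conjTranspose_mul_self H.conjTranspose
    rw [Matrix.conjTranspose_conjTranspose, Matrix.l2_opNorm_conjTranspose] at h
    exact h.symm
  have hgoal : euclideanOpNorm n H = ‖H‖ := rfl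
  rw [hgoal]
  have htr : ∀ k, (A ^ k).trace = ∑ i, lam i ^ k := fun k => OpNormAux.trace_pow A hA k
  rcases eq_or_lt_of_le hM0 with hM | hM
  · -- degenerate case `M = 0`, i.e. `H = 0`
    have hH0 : ‖H‖ = 0 := by
      have h := hHA; rw [← hM] at h; exact mul_self_eq_zero.mp h
    rw [hH0]
    have hev : ∀ᶠ k : ℕ in atTop, (0 : ℝ) = (A ^ k).trace ^ (1 / (2 * (k : ℝ))) := by
      filter_upwards [eventually_ge_atTop 1] with k hk
      have hlz : ∀ i, lam i = 0 := fun i => le_antisymm (hM ▸ hlM i) (hl0 i)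
      have hz : (A ^ k).trace = 0 := by
        rw [htr k]
        exact Finset.sum_eq_zero fun i _ => by rw [hlz i, zero_pow (by omega)]
      have hkpos : (0:ℝ) < (k : ℝ) := by exact_mod_cast hk
      rw [hz, Real.zero_rpow (by positivity : (0:ℝ) < 1 / (2 * (k:ℝ))).ne']
    exact tendsto_const_nhds.congr' hev
  · -- main case `M > 0`
    have hHpos : ‖H‖ = M ^ ((1:ℝ)/2) := by
      rw [← Real.sqrt_eq_rpow, ← hHA, Real.sqrt_mul_self (norm_nonneg H)]
    have hpowval : ∀ k : ℕ, 1 ≤ k → (M ^ k) ^ (1 / (2 * (k:ℝ))) = ‖H‖ := by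
      intro k hk
      have hkne : ((k:ℝ)) ≠ 0 := by positivity
      rw [hHpos, ← Real.rpow_natCast M k, ← Real.rpow_mul hM.le]
      congr 1
      field_simp
    have hlow : ∀ᶠ k : ℕ in atTop, ‖H‖ ≤ (A ^ k).trace ^ (1 / (2 * (k:ℝ))) := by
      filter_upwards [eventually_ge_atTop 1] with k hk
      have hkpos : (0:ℝ) < (k : ℝ) := by exact_mod_cast hk
      obtain ⟨i0, -, hi0⟩ := Finset.exists_mem_eq_sup' hne lam
      have h1 : M ^ k ≤ (A ^ k).trace := by
        rw [htr k, hMdef, hi0]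
        exact Finset.single_le_sum (f := fun i => lam i ^ k)
          (fun i _ => pow_nonneg (hl0 i) k) (Finset.mem_univ i0)
      rw [← hpowval k hk]
      exact Real.rpow_le_rpow (by positivity) h1 (by positivity)
    have hupp : ∀ᶠ k : ℕ in atTop,
        (A ^ k).trace ^ (1 / (2 * (k:ℝ))) ≤ (n:ℝ) ^ (1 / (2 * (k:ℝ))) * ‖H‖ := by
      filter_upwards [eventually_ge_atTop 1] with k hk
      have hkpos : (0:ℝ) < (k : ℝ) := by exact_mod_cast hk
      have h1 : (A ^ k).trace ≤ (n:ℝ) * M ^ k := by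
        rw [htr k]
        calc ∑ i, lam i ^ k ≤ ∑ _i : Fin n, M ^ k :=
              Finset.sum_le_sum fun i _ => pow_le_pow_left₀ (hl0 i) (hlM i) k
          _ = (n:ℝ) * M ^ k := by
              simp [Finset.sum_const, nsmul_eq_mul, Finset.card_univ]
      have htr0 : (0:ℝ) ≤ (A ^ k).trace := by
        rw [htr k]; exact Finset.sum_nonneg fun i _ => pow_nonneg (hl0 i) k
      calc (A ^ k).trace ^ (1 / (2 * (k:ℝ)))
          ≤ ((n:ℝ) * M ^ k) ^ (1 / (2 * (k:ℝ))) :=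
            Real.rpow_le_rpow htr0 h1 (by positivity)
        _ = (n:ℝ) ^ (1 / (2 * (k:ℝ))) * (M ^ k) ^ (1 / (2 * (k:ℝ))) :=
            Real.mul_rpow (by positivity) (by positivity)
        _ = (n:ℝ) ^ (1 / (2 * (k:ℝ))) * ‖H‖ := by rw [hpowval k hk]
    have h0 : Tendsto (fun k : ℕ => 1 / (2 * (k:ℝ))) atTop (nhds 0) := by
      have h2k : Tendsto (fun k : ℕ => 2 * (k:ℝ)) atTop atTop :=
        (tendsto_natCast_atTop_atTop (R := ℝ)).const_mul_atTop (by norm_num)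
      exact (tendsto_inv_atTop_zero.comp h2k).congr fun k => by
        simp [Function.comp, one_div]
    have hb : Tendsto (fun k : ℕ => (n:ℝ) ^ (1 / (2 * (k:ℝ)))) atTop (nhds 1) := by
      have hne0 : ((n:ℝ)) ≠ 0 := by positivity
      have := (tendsto_const_nhds (x := (n:ℝ)) (f := atTop)).rpow h0 (Or.inl hne0)
      simpa using this
    have hub : Tendsto (fun k : ℕ => (n:ℝ) ^ (1 / (2 * (k:ℝ))) * ‖H‖) atTop (nhds ‖H‖) := by
      simpa using hb.mul_const ‖H‖
    exact tendsto_of_tendsto_of_tendsto_of_le_of_le' tendsto_const_nhds hub hlow hupp
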